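/- Let G be a finite simple graph, X a subset of V(G), and ℓ a natural number. Then the auxiliary bipartite graph Ĝ(G,X) has a matching of cardinality ℓ if and only if there exists a simple graph H with vertex set X and exactly ℓ edges that appears as a 1-subdivision in G with the identity map on X as its nail map. -/

import Mathlib

/-- Vertex set of the auxiliary bipartite graph `Ĝ(G,X)`: one side is `V(G) ∖ X`,
the other side is the set of unordered pairs of distinct vertices of `X`. -/
def AuxV (V : Type*) (X : Set V) : Type _ :=
  {v : V // v ∉ X} ⊕ {p : Sym2 V // ¬ p.IsDiag ∧ ∀ x ∈ p, x ∈ X}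

/-- The auxiliary bipartite graph `Ĝ(G,X)`: a vertex `v ∈ V(G) ∖ X` is adjacent to a
pair `{x,y}` of distinct vertices of `X` iff `v` is adjacent in `G` to both `x` and `y`. -/
def auxGraph {V : Type*} (G : SimpleGraph V) (X : Set V) : SimpleGraph (AuxV V X) :=
  SimpleGraph.fromRel (fun a b =>
    ∃ (v : {v : V // v ∉ X}) (p : {p : Sym2 V // ¬ p.IsDiag ∧ ∀ x ∈ p, x ∈ X}),
      a = Sum.inl v ∧ b = Sum.inr p ∧ ∀ x ∈ (p : Sym2 V), G.Adj (v : V) x)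

/-- `G` has a matching of cardinality `ℓ`. -/
def HasMatchingOfSize {W : Type*} (G : SimpleGraph W) (ℓ : ℕ) : Prop :=
  ∃ M : G.Subgraph, M.IsMatching ∧ M.edgeSet.ncard = ℓ

/-- The maximum matching number `ν(G)`. -/
noncomputable def matchingNumber {W : Type*} (G : SimpleGraph W) : ℕ :=
  sSup {ℓ : ℕ | HasMatchingOfSize G ℓ}

/-- `H` (a graph with vertex set `X`) appears as a `1`-subdivision in `G` with the
identity map on `X` as its nail map: every edge of `H` has both endpoints in `X`, and
there is an injective choice of subdivision vertices outside `X`, one per edge of `H`,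
each adjacent in `G` to both endpoints of its edge. -/
def Appears1SubdivId {V : Type*} (G H : SimpleGraph V) (X : Set V) : Prop :=
  (∀ v ∈ H.support, v ∈ X) ∧
  ∃ s : H.edgeSet → V, Function.Injective s ∧ (∀ e, s e ∉ X) ∧
    ∀ (e : H.edgeSet), ∀ v ∈ (e : Sym2 V), G.Adj (s e) v

/-- `H` (a graph with vertex set `X`) is a `½`-shallow topological minor of `G` with
the identity map on `X` as nail map: for each edge `uv` of `H`, either `uv` is an edge
of `G`, or there is a subdivision vertex outside `X` adjacent in `G` to both `u` and
`v`, these subdivision vertices being pairwise distinct. -/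
def HalfShallowTMId {V : Type*} (G H : SimpleGraph V) (X : Set V) : Prop :=
  (∀ v ∈ H.support, v ∈ X) ∧
  ∃ s : H.edgeSet → Option V,
    (∀ e₁ e₂ w, s e₁ = some w → s e₂ = some w → e₁ = e₂) ∧
    (∀ e w, s e = some w → w ∉ X ∧ ∀ v ∈ (e : Sym2 V), G.Adj w v) ∧
    (∀ e, s e = none → (e : Sym2 V) ∈ G.edgeSet)

/-- The graph `G'` obtained from `G` by subdividing exactly once every edge of `G`
with both endpoints in `X`: vertex set `V ⊕ {edges of G inside X}`. -/
def SubdivInV (V : Type*) (G : SimpleGraph V) (X : Set V) : Type _ :=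
  V ⊕ {e : Sym2 V // e ∈ G.edgeSet ∧ ∀ v ∈ e, v ∈ X}

/-- The graph obtained from `G` by subdividing exactly once every edge with both
endpoints in `X`. -/
def subdivIn {V : Type*} (G : SimpleGraph V) (X : Set V) : SimpleGraph (SubdivInV V G X) :=
  SimpleGraph.fromRel (fun a b =>
    (∃ u v : V, a = Sum.inl u ∧ b = Sum.inl v ∧ G.Adj u v ∧ ¬(u ∈ X ∧ v ∈ X)) ∨
    (∃ (u : V) (e : {e : Sym2 V // e ∈ G.edgeSet ∧ ∀ v ∈ e, v ∈ X}),
      a = Sum.inl u ∧ b = Sum.inr e ∧ u ∈ (e : Sym2 V)))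

/-- For a finite simple graph `G`, `X ⊆ V(G)` and `ℓ : ℕ`, the auxiliary
bipartite graph `Ĝ(G,X)` has a matching of cardinality `ℓ` iff there is a simple graph
`H` with vertex set `X` and exactly `ℓ` edges appearing as a `1`-subdivision in `G`
with the identity map on `X` as its nail map. -/

lemma aux_adj_of {V : Type*} {G : SimpleGraph V} {X : Set V}
    (v : {v : V // v ∉ X}) (p : {p : Sym2 V // ¬ p.IsDiag ∧ ∀ x ∈ p, x ∈ X})
    (h : ∀ x ∈ (p : Sym2 V), G.Adj (v : V) x) :
    (auxGraph G X).Adj (Sum.inl v) (Sum.inr p) := by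
  refine (SimpleGraph.fromRel_adj (V := AuxV V X) _ _ _).mpr ?_
  exact ⟨Sum.inl_ne_inr, Or.inl ⟨v, p, rfl, rfl, h⟩⟩

lemma aux_adj_shape {V : Type*} {G : SimpleGraph V} {X : Set V} {a b : AuxV V X}
    (h : (auxGraph G X).Adj a b) :
    ∃ v p, ((a = Sum.inl v ∧ b = Sum.inr p) ∨ (a = Sum.inr p ∧ b = Sum.inl v)) ∧
      ∀ x ∈ (p : Sym2 V), G.Adj (v : V) x := by
  rw [auxGraph, SimpleGraph.fromRel_adj] at h
  obtain ⟨-, h | h⟩ := h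
  · obtain ⟨v, p, h1, h2, h3⟩ := h; exact ⟨v, p, Or.inl ⟨h1, h2⟩, h3⟩
  · obtain ⟨v, p, h1, h2, h3⟩ := h; exact ⟨v, p, Or.inr ⟨h2, h1⟩, h3⟩

lemma mem_support_of_mem_edge {V : Type*} {H : SimpleGraph V} {e : Sym2 V}
    (he : e ∈ H.edgeSet) {x : V} (hx : x ∈ e) : x ∈ H.support := by
  induction e using Sym2.ind with
  | _ a b =>
    rw [Sym2.mem_iff] at hx
    rw [SimpleGraph.mem_edgeSet] at he
    rcases hx with rfl | rfl
    · exact ⟨b, he⟩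
    · exact ⟨a, he.symm⟩

theorem stmt_1_fwd {V : Type} [Fintype V] (G : SimpleGraph V) (X : Set V) (ℓ : ℕ)
    (h : HasMatchingOfSize (auxGraph G X) ℓ) :
    ∃ H : SimpleGraph V, Appears1SubdivId G H X ∧ H.edgeSet.ncard = ℓ := by
  classical
  obtain ⟨M, hM, hcard⟩ := h
  set P : Set (Sym2 V) :=
    {q | ∃ (v : {v : V // v ∉ X}) (p : {p : Sym2 V // ¬ p.IsDiag ∧ ∀ x ∈ p, x ∈ X}),
      M.Adj (Sum.inl v) (Sum.inr p) ∧ (p : Sym2 V) = q} with hP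
  set H : SimpleGraph V := SimpleGraph.fromEdgeSet P with hH
  have hedge : H.edgeSet = P := by
    rw [hH, SimpleGraph.edgeSet_fromEdgeSet]
    ext q
    simp only [Set.mem_diff, Set.mem_setOf_eq, and_iff_left_iff_imp]
    rintro ⟨v, p, -, rfl⟩
    exact p.2.1
  -- choose witnesses for each edge of H
  have hchoice : ∀ e : H.edgeSet,
      ∃ (v : {v : V // v ∉ X}) (p : {p : Sym2 V // ¬ p.IsDiag ∧ ∀ x ∈ p, x ∈ X}),
        M.Adj (Sum.inl v) (Sum.inr p) ∧ (p : Sym2 V) = (e : Sym2 V) := by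
    intro e
    exact hedge.subset e.2
  choose f g hfg hg using hchoice
  -- matching uniqueness helpers
  have uniq_v : ∀ (v v' : {v : V // v ∉ X}) p, M.Adj (Sum.inl v) (Sum.inr p) →
      M.Adj (Sum.inl v') (Sum.inr p) → v = v' := by
    intro v v' p h1 h2
    have := ((hM (M.edge_vert h1.symm)).unique h1.symm h2.symm)
    exact Sum.inl.inj this
  have uniq_p : ∀ (v : {v : V // v ∉ X}) p p', M.Adj (Sum.inl v) (Sum.inr p) →
      M.Adj (Sum.inl v) (Sum.inr p') → p = p' := by
    intro v p p' h1 h2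
    have := ((hM (M.edge_vert h1)).unique h1 h2)
    exact Sum.inr.inj (α := {v : V // v ∉ X})
      (β := {p : Sym2 V // ¬ p.IsDiag ∧ ∀ x ∈ p, x ∈ X}) this
  refine ⟨H, ⟨?_, fun e => (f e : V), ?_, fun e => (f e).2, ?_⟩, ?_⟩
  · -- support ⊆ X
    intro v ⟨w, hvw⟩
    have he : s(v, w) ∈ H.edgeSet := hvw
    rw [hedge] at he
    obtain ⟨v', p, -, hpq⟩ := he
    exact p.2.2 v (hpq ▸ Sym2.mem_mk_left v w)
  · -- injectivity of s
    intro e₁ e₂ h12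
    have hf : f e₁ = f e₂ := Subtype.ext h12
    have hp : g e₁ = g e₂ := uniq_p (f e₂) (g e₁) (g e₂) (hf ▸ hfg e₁) (hfg e₂)
    exact Subtype.ext (by rw [← hg e₁, ← hg e₂, hp])
  · -- adjacency
    intro e x hx
    have hadj := (hfg e).adj_sub
    obtain ⟨v', p', hsh, hall⟩ := aux_adj_shape hadj
    rcases hsh with ⟨h1, h2⟩ | ⟨h1, h2⟩
    · have hv : v' = f e := Sum.inl.inj h1.symm ▸ rfl
      have hp : p' = g e := by
        have := Sum.inr.inj (α := {v : V // v ∉ X})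
          (β := {p : Sym2 V // ¬ p.IsDiag ∧ ∀ x ∈ p, x ∈ X}) h2
        exact this.symm
      subst hv hp
      exact hall x (by rw [hg e]; exact hx)
    · exact absurd h1 (by simp)
  · -- cardinality
    rw [← hcard, ← Nat.card_coe_set_eq, ← Nat.card_coe_set_eq]
    refine Nat.card_congr (Equiv.ofBijective
      (fun e => (⟨s(Sum.inl (f e), Sum.inr (g e)), (hfg e)⟩ : M.edgeSet)) ⟨?_, ?_⟩)
    · intro e₁ e₂ h12
      have h12 := Sym2.eq_iff.mp (congrArg Subtype.val h12)
      rcases h12 with ⟨-, h2⟩ | ⟨h1, -⟩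
      · have hp : g e₁ = g e₂ := Sum.inr.inj (α := {v : V // v ∉ X})
          (β := {p : Sym2 V // ¬ p.IsDiag ∧ ∀ x ∈ p, x ∈ X}) h2
        exact Subtype.ext (by rw [← hg e₁, ← hg e₂, hp])
      · exact absurd h1 Sum.inl_ne_inr
    · rintro ⟨q, hq⟩
      induction q using Sym2.ind with
      | _ a b =>
        rw [SimpleGraph.Subgraph.mem_edgeSet] at hq
        obtain ⟨v, p, hsh, -⟩ := aux_adj_shape hq.adj_sub
        rcases hsh with ⟨rfl, rfl⟩ | ⟨rfl, rfl⟩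
        · have hPmem : (p : Sym2 V) ∈ H.edgeSet := by
            rw [hedge]; exact ⟨v, p, hq, rfl⟩
          refine ⟨⟨(p : Sym2 V), hPmem⟩, Subtype.ext ?_⟩
          have hp : g ⟨(p : Sym2 V), hPmem⟩ = p := Subtype.ext (hg _)
          have h1 := hfg ⟨(p : Sym2 V), hPmem⟩
          rw [hp] at h1
          have hv : f ⟨(p : Sym2 V), hPmem⟩ = v := uniq_v _ _ p h1 hq
          dsimp only
          rw [hv, hp]
        · have hq' := hq.symm
          have hPmem : (p : Sym2 V) ∈ H.edgeSet := by
            rw [hedge]; exact ⟨v, p, hq', rfl⟩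
          refine ⟨⟨(p : Sym2 V), hPmem⟩, Subtype.ext ?_⟩
          have hp : g ⟨(p : Sym2 V), hPmem⟩ = p := Subtype.ext (hg _)
          have h1 := hfg ⟨(p : Sym2 V), hPmem⟩
          rw [hp] at h1
          have hv : f ⟨(p : Sym2 V), hPmem⟩ = v := uniq_v _ _ p h1 hq'
          dsimp only
          rw [hv, hp]
          exact Sym2.eq_swap

theorem stmt_1_back {V : Type} [Fintype V] (G : SimpleGraph V) (X : Set V) (ℓ : ℕ)
    (h : ∃ H : SimpleGraph V, Appears1SubdivId G H X ∧ H.edgeSet.ncard = ℓ) :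
    HasMatchingOfSize (auxGraph G X) ℓ := by
  obtain ⟨H, ⟨hsupp, s, hinj, hsX, hadj⟩, hcard⟩ := h
  set A : H.edgeSet → AuxV V X := fun e => Sum.inl ⟨s e, hsX e⟩ with hA
  set B : H.edgeSet → AuxV V X := fun e =>
    Sum.inr ⟨(e : Sym2 V), H.not_isDiag_of_mem_edgeSet e.2,
      fun x hx => hsupp x (mem_support_of_mem_edge e.2 hx)⟩ with hB
  have hAB : ∀ e e', A e ≠ B e' := fun e e' h => by simp [hA, hB] at h
  have hAinj : Function.Injective A := fun e₁ e₂ h =>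
    hinj (congrArg Subtype.val (Sum.inl.inj h))
  have hBinj : Function.Injective B := by
    intro e₁ e₂ h
    have h2 := Sum.inr.inj (α := {v : V // v ∉ X})
        (β := {p : Sym2 V // ¬ p.IsDiag ∧ ∀ x ∈ p, x ∈ X}) h
    injection h2 with h3
    exact Subtype.ext h3
  set M : (auxGraph G X).Subgraph :=
    { verts := Set.range A ∪ Set.range B
      Adj := fun a b => ∃ e, (a = A e ∧ b = B e) ∨ (a = B e ∧ b = A e)
      adj_sub := by
        rintro a b ⟨e, ⟨rfl, rfl⟩ | ⟨rfl, rfl⟩⟩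
        · exact aux_adj_of _ _ (hadj e)
        · exact (aux_adj_of _ _ (hadj e)).symm
      edge_vert := by
        rintro a b ⟨e, ⟨rfl, -⟩ | ⟨rfl, -⟩⟩
        · exact Or.inl ⟨e, rfl⟩
        · exact Or.inr ⟨e, rfl⟩
      symm := by
        constructor
        rintro a b ⟨e, ⟨rfl, rfl⟩ | ⟨rfl, rfl⟩⟩
        · exact ⟨e, Or.inr ⟨rfl, rfl⟩⟩
        · exact ⟨e, Or.inl ⟨rfl, rfl⟩⟩ } with hM
  refine ⟨M, ?_, ?_⟩
  · rintro a (⟨e, rfl⟩ | ⟨e, rfl⟩)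
    · refine ⟨B e, ⟨e, Or.inl ⟨rfl, rfl⟩⟩, ?_⟩
      rintro w ⟨e', ⟨he', rfl⟩ | ⟨he', -⟩⟩
      · rw [hAinj he']
      · exact absurd he' (hAB e e')
    · refine ⟨A e, ⟨e, Or.inr ⟨rfl, rfl⟩⟩, ?_⟩
      rintro w ⟨e', ⟨he', -⟩ | ⟨he', rfl⟩⟩
      · exact absurd he'.symm (hAB e' e)
      · rw [hBinj he']
  · rw [← hcard, ← Nat.card_coe_set_eq, ← Nat.card_coe_set_eq]
    refine Nat.card_congr (Equiv.ofBijective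
      (fun e => ⟨s(A e, B e), e, Or.inl ⟨rfl, rfl⟩⟩ :
        H.edgeSet → M.edgeSet) ⟨?_, ?_⟩).symm
    · intro e₁ e₂ h
      have h := Sym2.eq_iff.mp (congrArg Subtype.val h)
      rcases h with ⟨h1, -⟩ | ⟨h1, -⟩
      · exact hAinj h1
      · exact absurd h1 (hAB e₁ e₂)
    · rintro ⟨q, hq⟩
      induction q using Sym2.ind with
      | _ a b =>
        rw [SimpleGraph.Subgraph.mem_edgeSet] at hq
        obtain ⟨e, ⟨rfl, rfl⟩ | ⟨rfl, rfl⟩⟩ := hq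
        · exact ⟨e, rfl⟩
        · exact ⟨e, Subtype.ext (Sym2.eq_swap)⟩

theorem stmt_1 {V : Type} [Fintype V] (G : SimpleGraph V) (X : Set V) (ℓ : ℕ) :
    HasMatchingOfSize (auxGraph G X) ℓ ↔
      ∃ H : SimpleGraph V, Appears1SubdivId G H X ∧ H.edgeSet.ncard = ℓ := by
  exact ⟨stmt_1_fwd G X ℓ, stmt_1_back G X ℓ⟩
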